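/- For every integer k with 3 ≤ k ≤ 3K/2, the number of admissible models of size k satisfies m(k) ≥ binomial( K(K−1)/2, ⌊k/3⌋ ). -/

import Mathlib

noncomputable section

/-- Predictors for hierarchical model selection with paired interactions:
`K` main effects and `K(K−1)/2` pairwise interactions (unordered pairs of distinct
main effects), so `p = K(K+1)/2` predictors in total. -/
abbrev Predictor (K : ℕ) := Fin K ⊕ {s : Finset (Fin K) // s.card = 2}

/-- A model is admissible iff whenever it contains the interaction of main effects
`i` and `j` it also contains both main effects `i` and `j`. -/
def IsAdmissibleH {K : ℕ} (M : Finset (Predictor K)) : Prop :=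
  ∀ s : {s : Finset (Fin K) // s.card = 2}, Sum.inr s ∈ M → ∀ i ∈ s.1, Sum.inl i ∈ M

/-- `m(k)`: the number of admissible models of size exactly `k`. -/
def mH (K k : ℕ) : ℕ :=
  Set.ncard {M : Finset (Predictor K) | M.card = k ∧ IsAdmissibleH M}

theorem mH_lower_bound_small (K : ℕ) (hK : 2 ≤ K) (k : ℕ) (h3 : 3 ≤ k)
    (hk : 2 * k ≤ 3 * K) :
    (K * (K - 1) / 2).choose (k / 3) ≤ mH K k := by
  classical
  set t := k / 3 with ht
  have key : ∀ S : Finset {s : Finset (Fin K) // s.card = 2}, S.card = t →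
      ∃ M : Finset (Predictor K), (M.card = k ∧ IsAdmissibleH M) ∧
        (∀ x : {s : Finset (Fin K) // s.card = 2}, Sum.inr x ∈ M ↔ x ∈ S) := by
    intro S hS
    have hUcard : (S.biUnion (fun s => s.1)).card ≤ 2 * t := by
      calc (S.biUnion (fun s => s.1)).card ≤ ∑ s ∈ S, s.1.card := Finset.card_biUnion_le
        _ = ∑ _s ∈ S, 2 := Finset.sum_congr rfl (fun s _ => s.2)
        _ = 2 * t := by rw [Finset.sum_const, hS]; ring
    have hUle : (S.biUnion (fun s => s.1)).card ≤ k - t := by omega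
    obtain ⟨V, hUV, hVcard⟩ := Finset.exists_superset_card_eq hUle (by simp; omega)
    refine ⟨V.image Sum.inl ∪ S.image Sum.inr, ⟨?_, ?_⟩, ?_⟩
    · have hdisj : Disjoint (V.image (Sum.inl : Fin K → Predictor K)) (S.image Sum.inr) := by
        simp [Finset.disjoint_left]
      rw [Finset.card_union_of_disjoint hdisj,
        Finset.card_image_of_injective _ Sum.inl_injective,
        Finset.card_image_of_injective _ Sum.inr_injective, hVcard, hS]
      omega
    · intro s hs i hi
      have hsS : s ∈ S := by
        rcases Finset.mem_union.1 hs with h | h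
        · simp at h
        · obtain ⟨x, hx, hxe⟩ := Finset.mem_image.1 h
          cases Sum.inr_injective hxe; exact hx
      have hU : i ∈ S.biUnion (fun s => s.1) := Finset.mem_biUnion.2 ⟨s, hsS, hi⟩
      exact Finset.mem_union_left _ (Finset.mem_image_of_mem _ (hUV hU))
    · intro x
      simp
  choose f hf1 hf2 using key
  have hfin : {M : Finset (Predictor K) | M.card = k ∧ IsAdmissibleH M}.Finite :=
    Set.toFinite _
  rw [mH, Set.ncard_eq_toFinset_card _ hfin]
  have hcard : (K * (K - 1) / 2).choose t =
      ((Finset.univ : Finset {s : Finset (Fin K) // s.card = 2}).powersetCard t).card := by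
    rw [Finset.card_powersetCard, Finset.card_univ,
      Fintype.card_finset_len, Fintype.card_fin, Nat.choose_two_right]
  rw [hcard]
  apply Finset.card_le_card_of_injOn (fun S => if h : S.card = t then f S h else ∅)
  · intro S hS
    have hSc : S.card = t := (Finset.mem_powersetCard.1 hS).2
    simp only [dif_pos hSc]
    simpa [Set.Finite.mem_toFinset] using hf1 S hSc
  · intro S1 h1 S2 h2 heq
    have c1 : S1.card = t := by simpa using (Finset.mem_powersetCard.1 h1).2
    have c2 : S2.card = t := by simpa using (Finset.mem_powersetCard.1 h2).2
    simp only [dif_pos c1, dif_pos c2] at heq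
    ext x
    rw [← hf2 S1 c1 x, ← hf2 S2 c2 x, heq]

end
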